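/- (Proposition 1) Let d be a positive natural number, let Λ be a d×d real diagonal matrix with strictly positive diagonal entries λ₁, …, λ_d, and let α be a nonzero real number. Let Λ^α denote the diagonal matrix with diagonal entries λ₁^α, …, λ_d^α. If for all nonzero vectors v, w in ℝ^d the cosine similarity of Λ^α v and Λ^α w equals the cosine similarity of v and w, then Λ is a scalar multiple of the identity, i.e. there exists c > 0 with Λ = c·I. -/

import Mathlib

open Matrix

/-- The cosine similarity of two vectors in Euclidean space:
`⟪v, w⟫ / (‖v‖ * ‖w‖)`. -/
noncomputable def cosineSim {d : ℕ} (v w : EuclideanSpace ℝ (Fin d)) : ℝ :=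
  (inner ℝ v w : ℝ) / (‖v‖ * ‖w‖)

/-- Proposition 1: if `Λ^α` (with `Λ = diagonal λ`, `λᵢ > 0`, `α ≠ 0`) leaves cosine
similarity invariant, then `Λ` is a scalar multiple of the identity. -/
theorem diagonal_rpow_cosineSim_invariant_imp_scalar
    (d : ℕ) (hd : 0 < d) (lam : Fin d → ℝ) (hlam : ∀ i, 0 < lam i)
    (α : ℝ) (hα : α ≠ 0)
    (h : ∀ v w : EuclideanSpace ℝ (Fin d), v ≠ 0 → w ≠ 0 →
      cosineSim (Matrix.toEuclideanLin (Matrix.diagonal fun i => lam i ^ α) v)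
          (Matrix.toEuclideanLin (Matrix.diagonal fun i => lam i ^ α) w) =
        cosineSim v w) :
    ∃ c : ℝ, 0 < c ∧ Matrix.diagonal lam = c • (1 : Matrix (Fin d) (Fin d) ℝ) := by
  classical
  set μ : Fin d → ℝ := fun k => lam k ^ α with hμdef
  have hμpos : ∀ i, 0 < μ i := fun i => Real.rpow_pos_of_pos (hlam i) α
  have key : ∀ i j : Fin d, lam i = lam j := by
    intro i j
    rcases eq_or_ne i j with rfl | hij
    · rfl
    -- use the test vectors e_i + e_j and e_i - e_j
    set v : EuclideanSpace ℝ (Fin d) :=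
      EuclideanSpace.single i 1 + EuclideanSpace.single j 1 with hv
    set w : EuclideanSpace ℝ (Fin d) :=
      EuclideanSpace.single i 1 - EuclideanSpace.single j 1 with hw
    have happ : ∀ x : EuclideanSpace ℝ (Fin d) , ∀ k,
        (Matrix.toEuclideanLin (Matrix.diagonal μ) x) k = μ k * x k := by
      intro x k
      simp [Matrix.toEuclideanLin_apply, Matrix.mulVec_diagonal]
    have hvk : ∀ k, v k = (if k = i then 1 else 0) + (if k = j then 1 else 0) := by
      intro k
      simp [hv, EuclideanSpace.single_apply]
    have hwk : ∀ k, w k = (if k = i then 1 else 0) - (if k = j then 1 else 0) := by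
      intro k
      simp [hw, EuclideanSpace.single_apply]
    have hvne : v ≠ 0 := by
      intro h0
      have : v i = 0 := by rw [h0]; rfl
      rw [hvk i] at this
      simp [hij, Ne.symm hij] at this
    have hwne : w ≠ 0 := by
      intro h0
      have : w i = 0 := by rw [h0]; rfl
      rw [hwk i] at this
      simp [hij, Ne.symm hij] at this
    set v' := Matrix.toEuclideanLin (Matrix.diagonal μ) v with hv'
    set w' := Matrix.toEuclideanLin (Matrix.diagonal μ) w with hw'
    have hv'ne : v' ≠ 0 := by
      intro h0
      have : v' i = 0 := by rw [h0]; rfl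
      rw [hv', happ v i, hvk i] at this
      simp [hij, Ne.symm hij] at this
      exact (hμpos i).ne' this
    have hw'ne : w' ≠ 0 := by
      intro h0
      have : w' i = 0 := by rw [h0]; rfl
      rw [hw', happ w i, hwk i] at this
      simp [hij, Ne.symm hij] at this
      exact (hμpos i).ne' this
    -- cosine similarity of v and w is 0
    have hinner : (inner ℝ v w : ℝ) = 0 := by
      rw [hv, hw]
      simp [inner_add_left, inner_sub_right, EuclideanSpace.inner_single_left,
        EuclideanSpace.single_apply, hij, Ne.symm hij]
    have hinner' : (inner ℝ v' w' : ℝ) = μ i ^ 2 - μ j ^ 2 := by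
      have : (inner ℝ v' w' : ℝ) = ∑ k, v' k * w' k := by
        simp only [PiLp.inner_apply, RCLike.inner_apply, conj_trivial, mul_comm]
      rw [this]
      have hterm : ∀ k, v' k * w' k =
          (if k = i then μ i ^ 2 else 0) - (if k = j then μ j ^ 2 else 0) := by
        intro k
        rw [hv', hw', happ v k, happ w k, hvk k, hwk k]
        rcases eq_or_ne k i with rfl | hki
        · simp [hij, Ne.symm hij]; ring
        · rcases eq_or_ne k j with rfl | hkj
          · simp [hki]; ring
          · simp [hki, hkj]
      simp_rw [hterm]
      rw [Finset.sum_sub_distrib]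
      simp
    have hcs := h v w hvne hwne
    rw [← hv', ← hw'] at hcs
    unfold cosineSim at hcs
    rw [hinner, hinner'] at hcs
    simp at hcs
    have hden : ‖v'‖ * ‖w'‖ ≠ 0 :=
      mul_ne_zero (norm_ne_zero_iff.mpr hv'ne) (norm_ne_zero_iff.mpr hw'ne)
    have hnum : μ i ^ 2 - μ j ^ 2 = 0 := by
      rcases hcs with h1 | h2
      · exact h1
      · rcases h2 with h2 | h2
        · exact absurd h2 hv'ne
        · exact absurd h2 hw'ne
    have hμeq : μ i = μ j := by
      have h2 : μ i ^ 2 = μ j ^ 2 := by linarith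
      have hi := hμpos i
      have hj := hμpos j
      nlinarith [sq_nonneg (μ i - μ j), sq_nonneg (μ i + μ j)]
    -- recover lam i = lam j from rpow injectivity
    have := congrArg (fun x => x ^ α⁻¹) hμeq
    simpa [hμdef, Real.rpow_rpow_inv (hlam i).le hα,
      Real.rpow_rpow_inv (hlam j).le hα] using this
  refine ⟨lam ⟨0, hd⟩, hlam _, ?_⟩
  ext i j
  rcases eq_or_ne i j with rfl | hij
  · simp [Matrix.diagonal_apply_eq, key i ⟨0, hd⟩]
  · simp [Matrix.diagonal_apply_ne _ hij, Matrix.one_apply_ne hij]
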